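/- Combining 2κ(κ−√(κ²−1)) = 1 + Θ(1/κ²) with the polynomial-growth condition α^d ≤ d^{O(1)} where α² = 2κ(κ−√(κ²−1)): there exist constants such that α(d)^d is polynomially bounded in d if and only if κ(d) = Ω(√(d/log d)). -/

import Mathlib

open Filter

lemma aux_bounds (k : ℝ) (hk : 1 ≤ k) :
    1 ≤ Real.sqrt (2 * k * (k - Real.sqrt (k ^ 2 - 1))) ∧
    1 / (16 * k ^ 2) ≤ Real.log (Real.sqrt (2 * k * (k - Real.sqrt (k ^ 2 - 1)))) ∧
    Real.log (Real.sqrt (2 * k * (k - Real.sqrt (k ^ 2 - 1)))) ≤ 1 / (2 * k ^ 2) := by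
  have hk0 : (0:ℝ) < k := lt_of_lt_of_le one_pos hk
  set s := Real.sqrt (k ^ 2 - 1) with hs
  have hs0 : 0 ≤ s := Real.sqrt_nonneg _
  have hs2 : s ^ 2 = k ^ 2 - 1 := Real.sq_sqrt (by nlinarith)
  have hsk : s ≤ k := by nlinarith
  have ht0 : 0 < k + s := by linarith
  have hid : 2 * k * (k - s) = 1 + (1 / (k + s)) ^ 2 := by
    field_simp
    nlinarith [hs2]
  set x := (1 / (k + s)) ^ 2 with hx
  have hx0 : 0 < x := by positivity
  have hxlo : 1 / (4 * k ^ 2) ≤ x := by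
    rw [hx, div_pow, one_pow]
    apply div_le_div_of_nonneg_left one_pos.le (by positivity)
    nlinarith
  have hxhi : x ≤ 1 / k ^ 2 := by
    rw [hx, div_pow, one_pow]
    apply div_le_div_of_nonneg_left one_pos.le (by positivity)
    nlinarith
  have hx1 : x ≤ 1 := le_trans hxhi (by rw [div_le_one (by positivity)]; nlinarith)
  rw [hid]
  have hlogsqrt : Real.log (Real.sqrt (1 + x)) = Real.log (1 + x) / 2 :=
    Real.log_sqrt (by linarith)
  have hup : Real.log (1 + x) ≤ x := by
    have := Real.log_le_sub_one_of_pos (show (0:ℝ) < 1 + x by linarith)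
    linarith
  have hlo : x / 2 ≤ Real.log (1 + x) := by
    have h1 : Real.log (1 / (1 + x)) ≤ 1 / (1 + x) - 1 :=
      Real.log_le_sub_one_of_pos (by positivity)
    rw [one_div, Real.log_inv, ← one_div] at h1
    have h2 : (1:ℝ) - 1 / (1 + x) = x / (1 + x) := by field_simp; ring
    have h3 : x / 2 ≤ x / (1 + x) := by
      apply div_le_div_of_nonneg_left hx0.le (by positivity)
      linarith
    linarith
  refine ⟨?_, ?_, ?_⟩
  · calc (1:ℝ) = Real.sqrt 1 := Real.sqrt_one.symm
      _ ≤ Real.sqrt (1 + x) := Real.sqrt_le_sqrt (by linarith)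
  · rw [hlogsqrt]
    have hq : 1 / (16 * k ^ 2) = (1 / (4 * k ^ 2)) / 4 := by ring
    linarith
  · rw [hlogsqrt]
    calc Real.log (1 + x) / 2 ≤ x / 2 := by linarith
      _ ≤ (1 / k ^ 2) / 2 := by linarith
      _ = 1 / (2 * k ^ 2) := by ring

theorem stmt_17 (κ : ℕ → ℝ) (hκ : ∀ d, 1 ≤ κ d)
    (α : ℕ → ℝ)
    (hαdef : ∀ d, α d = Real.sqrt (2 * κ d * (κ d - Real.sqrt ((κ d) ^ 2 - 1)))) :
    (∃ C : ℝ, ∀ᶠ d : ℕ in atTop, (α d) ^ d ≤ (d : ℝ) ^ C) ↔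
      (∃ c > (0 : ℝ), ∀ᶠ d : ℕ in atTop,
        c * Real.sqrt ((d : ℝ) / Real.log d) ≤ κ d) := by
  constructor
  · rintro ⟨C, hC⟩
    set C' : ℝ := max C 1 with hC'
    have hC'1 : (1:ℝ) ≤ C' := le_max_right _ _
    have hsC : (1:ℝ) ≤ Real.sqrt C' := by
      calc (1:ℝ) = Real.sqrt 1 := Real.sqrt_one.symm
        _ ≤ Real.sqrt C' := Real.sqrt_le_sqrt hC'1
    have hsC0 : (0:ℝ) < Real.sqrt C' := by linarith
    refine ⟨1 / (4 * Real.sqrt C'), by positivity, ?_⟩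
    filter_upwards [hC, eventually_ge_atTop 2] with d hd hd2
    set k := κ d with hkdef
    have hk : 1 ≤ k := hκ d
    have hk0 : (0:ℝ) < k := lt_of_lt_of_le one_pos hk
    obtain ⟨hα1, hlo, -⟩ := aux_bounds k hk
    rw [← hαdef d] at hα1 hlo
    have hαpos : 0 < α d := lt_of_lt_of_le one_pos hα1
    have hd2' : (2:ℝ) ≤ (d:ℝ) := by exact_mod_cast hd2
    have hd0 : (0:ℝ) < d := by linarith
    have hld : 0 < Real.log d := Real.log_pos (by linarith)
    -- take logs
    have hdlog : (d:ℝ) * Real.log (α d) ≤ C' * Real.log d := by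
      have h := Real.log_le_log (pow_pos hαpos d) hd
      rw [Real.log_pow, Real.log_rpow hd0] at h
      have : C * Real.log d ≤ C' * Real.log d :=
        mul_le_mul_of_nonneg_right (le_max_left _ _) hld.le
      exact_mod_cast le_trans h this
    have h1 : (1:ℝ) ≤ 16 * k ^ 2 * Real.log (α d) := by
      rw [div_le_iff₀ (by positivity)] at hlo
      linarith [hlo]
    have key : (d:ℝ) ≤ 16 * C' * k ^ 2 * Real.log d := by
      have h2 : (d:ℝ) * 1 ≤ (d:ℝ) * (16 * k ^ 2 * Real.log (α d)) :=
        mul_le_mul_of_nonneg_left h1 hd0.le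
      have h3 : (16 * k ^ 2) * ((d:ℝ) * Real.log (α d)) ≤ (16 * k ^ 2) * (C' * Real.log d) :=
        mul_le_mul_of_nonneg_left hdlog (by positivity)
      nlinarith [h2, h3]
    have key2 : (d:ℝ) / Real.log d ≤ 16 * C' * k ^ 2 := by
      rw [div_le_iff₀ hld]; linarith
    have hsqrt : Real.sqrt ((d:ℝ) / Real.log d) ≤ 4 * Real.sqrt C' * k := by
      have h4 : Real.sqrt ((d:ℝ) / Real.log d) ≤ Real.sqrt (16 * C' * k ^ 2) :=
        Real.sqrt_le_sqrt key2
      have h5 : Real.sqrt (16 * C' * k ^ 2) = 4 * Real.sqrt C' * k := by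
        rw [show (16 * C' * k ^ 2 : ℝ) = (4 * k) ^ 2 * C' by ring,
          Real.sqrt_mul (by positivity), Real.sqrt_sq (by positivity)]
        ring
      rw [h5] at h4; exact h4
    rw [div_mul_eq_mul_div, one_mul, div_le_iff₀ (by positivity)]
    linarith
  · rintro ⟨c, hc0, h⟩
    refine ⟨1 / (2 * c ^ 2), ?_⟩
    filter_upwards [h, eventually_ge_atTop 2] with d hd hd2
    set k := κ d with hkdef
    have hk : 1 ≤ k := hκ d
    have hk0 : (0:ℝ) < k := lt_of_lt_of_le one_pos hk
    obtain ⟨hα1, -, hhi⟩ := aux_bounds k hk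
    rw [← hαdef d] at hα1 hhi
    have hαpos : 0 < α d := lt_of_lt_of_le one_pos hα1
    have hd2' : (2:ℝ) ≤ (d:ℝ) := by exact_mod_cast hd2
    have hd0 : (0:ℝ) < d := by linarith
    have hld : 0 < Real.log d := Real.log_pos (by linarith)
    have h2 : (c * Real.sqrt ((d:ℝ) / Real.log d)) ^ 2 ≤ k ^ 2 :=
      pow_le_pow_left₀ (by positivity) hd 2
    rw [mul_pow, Real.sq_sqrt (by positivity)] at h2
    have h3 : c ^ 2 * (d:ℝ) ≤ k ^ 2 * Real.log d := by
      rw [mul_div_assoc'] at h2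
      rw [div_le_iff₀ hld] at h2
      linarith
    have hfinal : (d:ℝ) * Real.log (α d) ≤ (1 / (2 * c ^ 2)) * Real.log d := by
      have h4 : (d:ℝ) * Real.log (α d) ≤ (d:ℝ) * (1 / (2 * k ^ 2)) :=
        mul_le_mul_of_nonneg_left hhi hd0.le
      have h5 : (d:ℝ) * (1 / (2 * k ^ 2)) ≤ (1 / (2 * c ^ 2)) * Real.log d := by
        rw [mul_one_div, one_div_mul_eq_div, div_le_div_iff₀ (by positivity) (by positivity)]
        nlinarith [h3]
      linarith
    calc α d ^ d = Real.exp ((d:ℝ) * Real.log (α d)) := by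
          rw [← Real.log_pow, Real.exp_log (pow_pos hαpos d)]
      _ ≤ Real.exp ((1 / (2 * c ^ 2)) * Real.log d) := Real.exp_le_exp.mpr hfinal
      _ = (d:ℝ) ^ (1 / (2 * c ^ 2)) := by
          rw [Real.rpow_def_of_pos hd0, mul_comm]
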